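/- Let f : [0,1]^d → ℝ be continuously differentiable on a cube B with side length h and center c, and suppose ∂f/∂x_i(x) ≥ C > 0 for all x ∈ B. Then the best-linear-approximation coefficient θ_i = (∫_B (f(x)−θ₀)(x_i−c_i) dx)/(∫_B (x_i−c_i)² dx), where θ₀ = (1/h^d)∫_B f(x) dx, satisfies θ_i ≥ C. -/

import Mathlib

open Set MeasureTheory

theorem stmt_3 (d : ℕ) (hd : 1 ≤ d) (i : Fin d) (C h : ℝ) (hC : 0 < C) (hh : 0 < h)
    (c : Fin d → ℝ) (f : (Fin d → ℝ) → ℝ)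
    (B : Set (Fin d → ℝ))
    (hB : B = Icc (fun j => c j - h / 2) (fun j => c j + h / 2))
    (hf : ContDiff ℝ 1 f)
    (hder : ∀ x ∈ B, C ≤ fderiv ℝ f x (Pi.single i 1))
    (θ₀ θi : ℝ)
    (hθ₀ : θ₀ = (1 / h ^ d) * ∫ x in B, f x)
    (hθi : θi = (∫ x in B, (f x - θ₀) * (x i - c i)) / (∫ x in B, (x i - c i) ^ 2)) :
    C ≤ θi := by
  have hfc : Continuous f := hf.continuous
  set I : Set ℝ := Icc (c i - h / 2) (c i + h / 2) with hIdef
  set σ : (Fin d → ℝ) → (Fin d → ℝ) :=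
    fun x j => if j = i then 2 * c i - x j else x j with hσdef
  set F : (Fin d → ℝ) → ℝ := fun x => (f x - θ₀ - C * (x i - c i)) * (x i - c i) with hFdef
  set Q : (Fin d → ℝ) → ℝ := fun x => (x i - c i) ^ 2 with hQdef
  have measB : MeasurableSet B := by rw [hB]; exact measurableSet_Icc
  have cptB : IsCompact B := by rw [hB]; exact isCompact_Icc
  -- update stays in B
  have hupd : ∀ x ∈ B, ∀ r ∈ I, Function.update x i r ∈ B := by
    intro x hx r hr
    rw [hB, Set.mem_Icc] at hx ⊢
    obtain ⟨h1, h2⟩ := hx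
    refine ⟨fun j => ?_, fun j => ?_⟩ <;> by_cases hj : j = i
    · subst hj; simpa using hr.1
    · simpa [Function.update_apply, hj] using h1 j
    · subst hj; simpa using hr.2
    · simpa [Function.update_apply, hj] using h2 j
  -- monotonicity along the i-th coordinate
  have mono : ∀ x ∈ B, ∀ s ∈ I, ∀ t ∈ I, s ≤ t →
      C * (t - s) ≤ f (Function.update x i t) - f (Function.update x i s) := by
    intro x hx s hs t ht hst
    have hder' : ∀ r : ℝ,
        HasDerivAt (fun r => f (Function.update x i r))
          (fderiv ℝ f (Function.update x i r) (Pi.single i 1)) r := fun r =>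
      ((hf.differentiable one_ne_zero) _).hasFDerivAt.comp_hasDerivAt r (hasDerivAt_update x i r)
    have := (convex_Icc (c i - h / 2) (c i + h / 2)).mul_sub_le_image_sub_of_le_deriv
      (f := fun r => f (Function.update x i r))
      (fun r _ => (hder' r).continuousAt.continuousWithinAt)
      (fun r _ => (hder' r).differentiableAt.differentiableWithinAt)
      (fun r hr => by
        rw [(hder' r).deriv]
        exact hder _ (hupd x hx r (interior_subset hr)))
      s hs t ht hst
    exact this
  -- σ maps B into B
  have hmemσ : ∀ x ∈ B, σ x ∈ B := by
    intro x hx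
    rw [hB, Set.mem_Icc] at hx ⊢
    obtain ⟨h1, h2⟩ := hx
    refine ⟨fun j => ?_, fun j => ?_⟩ <;> by_cases hj : j = i
    · subst hj
      have hb : x j ≤ c j + h / 2 := h2 j
      simp only [hσdef, if_pos rfl]
      show c j - h / 2 ≤ 2 * c j - x j
      linarith
    · simp only [hσdef, if_neg hj]; exact h1 j
    · subst hj
      have hb : c j - h / 2 ≤ x j := h1 j
      simp only [hσdef, if_pos rfl]
      show 2 * c j - x j ≤ c j + h / 2
      linarith
    · simp only [hσdef, if_neg hj]; exact h2 j
  have hσinvol : ∀ x, σ (σ x) = x := by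
    intro x; funext j
    by_cases hj : j = i
    · simp only [hσdef, if_pos hj]; ring
    · simp only [hσdef, if_neg hj]
  have hσcont : Continuous σ := by
    rw [hσdef]
    refine continuous_pi fun j => ?_
    by_cases hj : j = i
    · simp only [if_pos hj]; exact continuous_const.sub (continuous_apply j)
    · simp only [if_neg hj]; exact continuous_apply j
  have hMP : MeasurePreserving σ volume volume := by
    have hcomp : ∀ j : Fin d, MeasurePreserving
        (fun t : ℝ => if j = i then 2 * c i - t else t) volume volume := by
      intro j
      by_cases hj : j = i
      · simp only [if_pos hj]
        exact Measure.measurePreserving_sub_left volume (2 * c i)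
      · simp only [if_neg hj]
        exact MeasurePreserving.id volume
    have := MeasureTheory.measurePreserving_pi (fun _ : Fin d => (volume : Measure ℝ))
      (fun _ => volume) hcomp
    rw [volume_pi]
    exact this
  have hEmb : MeasurableEmbedding σ :=
    (Homeomorph.toMeasurableEquiv ⟨⟨σ, σ, hσinvol, hσinvol⟩, hσcont, hσcont⟩).measurableEmbedding
  have hpre : σ ⁻¹' B = B := by
    ext x
    simp only [Set.mem_preimage]
    constructor
    · intro hx
      have := hmemσ (σ x) hx
      rwa [hσinvol] at this
    · exact hmemσ x
  -- pointwise inequality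
  have pt : ∀ x ∈ B, 0 ≤ F x + F (σ x) := by
    intro x hx
    have hxiI : x i ∈ I := by
      rw [hB, Set.mem_Icc] at hx
      exact ⟨hx.1 i, hx.2 i⟩
    obtain ⟨hxi1, hxi2⟩ := hxiI
    have hσiI : 2 * c i - x i ∈ I := ⟨by linarith, by linarith⟩
    have hσx : Function.update x i (2 * c i - x i) = σ x := by
      funext j
      by_cases hj : j = i
      · subst hj; simp [hσdef]
      · simp [hσdef, Function.update_apply, hj]
    have hσxi : σ x i = 2 * c i - x i := by simp [hσdef]
    simp only [hFdef, hσxi]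
    rcases le_total (c i) (x i) with hci | hci
    · have h1 := mono x hx (2 * c i - x i) hσiI (x i) ⟨hxi1, hxi2⟩ (by linarith)
      rw [hσx, Function.update_eq_self] at h1
      have h2 : 0 ≤ (f x - f (σ x) - 2 * C * (x i - c i)) * (x i - c i) :=
        mul_nonneg (by linarith) (by linarith)
      nlinarith [h2]
    · have h1 := mono x hx (x i) ⟨hxi1, hxi2⟩ (2 * c i - x i) hσiI (by linarith)
      rw [hσx, Function.update_eq_self] at h1
      have h2 : 0 ≤ (f (σ x) - f x - 2 * C * (c i - x i)) * (c i - x i) :=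
        mul_nonneg (by linarith) (by linarith)
      nlinarith [h2]
  -- integrability
  have hFcont : Continuous F := by rw [hFdef]; fun_prop
  have hQcont : Continuous Q := by rw [hQdef]; fun_prop
  have intF : IntegrableOn F B := hFcont.continuousOn.integrableOn_compact cptB
  have intFσ : IntegrableOn (fun x => F (σ x)) B :=
    (hFcont.comp hσcont).continuousOn.integrableOn_compact cptB
  have intQ : IntegrableOn Q B := hQcont.continuousOn.integrableOn_compact cptB
  -- reflection identity
  have hrefl : ∫ x in B, F (σ x) = ∫ x in B, F x := by
    have := hMP.setIntegral_preimage_emb hEmb F B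
    rwa [hpre] at this
  -- nonnegativity of ∫ F
  have h0 : 0 ≤ ∫ x in B, (F x + F (σ x)) := setIntegral_nonneg measB pt
  rw [integral_add intF intFσ, hrefl] at h0
  have hFnn : 0 ≤ ∫ x in B, F x := by linarith
  -- positivity of the denominator
  have hDpos : 0 < ∫ x in B, Q x := by
    rw [setIntegral_pos_iff_support_of_nonneg_ae
      (Filter.Eventually.of_forall fun x => by simp only [hQdef]; positivity) intQ]
    have hz : volume {x : Fin d → ℝ | x i = c i} = 0 := by
      have hset : {x : Fin d → ℝ | x i = c i}
          = Set.pi univ (fun j => if j = i then ({c i} : Set ℝ) else univ) := by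
        ext x
        simp only [mem_setOf_eq, Set.mem_univ_pi]
        constructor
        · intro hx j
          by_cases hj : j = i
          · subst hj; simp [hx]
          · simp [hj]
        · intro hx
          have := hx i
          simpa using this
      rw [hset, volume_pi_pi]
      exact Finset.prod_eq_zero (Finset.mem_univ i) (by simp)
    have hBvol : 0 < volume B := by
      rw [hB, Real.volume_Icc_pi]
      refine CanonicallyOrderedAdd.prod_pos.mpr fun j _ => ?_
      have : (c j + h / 2) - (c j - h / 2) = h := by ring
      rw [this]
      exact ENNReal.ofReal_pos.mpr hh
    have hsub : B ⊆ (Function.support Q ∩ B) ∪ (B ∩ {x | x i = c i}) := by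
      intro x hx
      by_cases hxi : x i = c i
      · exact Or.inr ⟨hx, hxi⟩
      · refine Or.inl ⟨?_, hx⟩
        simp only [Function.mem_support, hQdef]
        intro hcon
        exact hxi (by nlinarith [sq_nonneg (x i - c i)])
    calc (0 : ENNReal) < volume B := hBvol
      _ ≤ volume ((Function.support Q ∩ B) ∪ (B ∩ {x | x i = c i})) := measure_mono hsub
      _ ≤ volume (Function.support Q ∩ B) + volume (B ∩ {x | x i = c i}) := measure_union_le _ _
      _ = volume (Function.support Q ∩ B) := by
          rw [measure_mono_null inter_subset_right hz, add_zero]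
  -- splitting the numerator
  have hsplit : ∫ x in B, (f x - θ₀) * (x i - c i)
      = (∫ x in B, F x) + C * ∫ x in B, Q x := by
    have heq : ∀ x : Fin d → ℝ, (f x - θ₀) * (x i - c i) = F x + C * Q x := by
      intro x; simp only [hFdef, hQdef]; ring
    calc ∫ x in B, (f x - θ₀) * (x i - c i) = ∫ x in B, (F x + C * Q x) := by
          simp_rw [heq]
      _ = (∫ x in B, F x) + ∫ x in B, C * Q x :=
          integral_add intF (intQ.const_mul C)
      _ = (∫ x in B, F x) + C * ∫ x in B, Q x := by rw [integral_const_mul]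
  rw [hθi]
  have hQeq : (∫ x in B, (x i - c i) ^ 2) = ∫ x in B, Q x := rfl
  rw [hQeq, hsplit]
  rw [le_div_iff₀ hDpos]
  nlinarith [hFnn, hDpos, mul_le_mul_of_nonneg_right (le_refl C) (le_of_lt hDpos)]
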